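/- Let T(u) = ∑_{m≥0} 2·(10m+5)!!/((2m+1)!!)⁵ · u^{2m+1} ∈ ℚ[[u]] and let θ = (1/2)·u·d/du. Then T satisfies the extended Picard–Fuchs equation (2θ−1)θ⁴T = 5u²(2θ+1)(5θ+1)(5θ+2)(5θ+3)(5θ+4)T. -/

import Mathlib

/-- The operator `θ = (1/2)·u·d/du` on formal power series over `ℚ`: `(θ f)ₙ = (n/2)·fₙ`. -/
noncomputable def theta (f : PowerSeries ℚ) : PowerSeries ℚ :=
  PowerSeries.mk fun n => ((n : ℚ) / 2) * PowerSeries.coeff n f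

/-- Walcher's disk potential `T(u) = ∑_{m ≥ 0} 2·(10m+5)!!/((2m+1)!!)⁵ · u^{2m+1}`
(for odd `n = 2m+1` one has `10m+5 = 5n` and `(2m+1)!! = n!!`). -/
noncomputable def T : PowerSeries ℚ :=
  PowerSeries.mk fun n =>
    if n % 2 = 1 then
      2 * (Nat.doubleFactorial (5 * n) : ℚ) / (Nat.doubleFactorial n : ℚ) ^ 5
    else 0

/-- The operator `5θ + a`. -/
noncomputable def A (a : ℚ) (f : PowerSeries ℚ) : PowerSeries ℚ :=
  (5 : ℚ) • theta f + a • f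

lemma coeff_theta (n : ℕ) (f : PowerSeries ℚ) :
    PowerSeries.coeff n (theta f) = ((n : ℚ) / 2) * PowerSeries.coeff n f :=
  PowerSeries.coeff_mk _ _

lemma coeff_A (a : ℚ) (n : ℕ) (f : PowerSeries ℚ) :
    PowerSeries.coeff n (A a f) = ((5 : ℚ) * ((n : ℚ) / 2) + a) * PowerSeries.coeff n f := by
  simp [A, coeff_theta]
  ring

lemma coeff_T (n : ℕ) :
    PowerSeries.coeff n T =
      if n % 2 = 1 then
        2 * (Nat.doubleFactorial (5 * n) : ℚ) / (Nat.doubleFactorial n : ℚ) ^ 5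
      else 0 :=
  PowerSeries.coeff_mk _ _

/-- `T` satisfies the extended Picard–Fuchs equation
`(2θ−1)θ⁴T = 5u²(2θ+1)(5θ+1)(5θ+2)(5θ+3)(5θ+4)T`. -/
theorem T_satisfies_extended_picard_fuchs :
    (2 : ℚ) • theta (theta (theta (theta (theta T)))) - theta (theta (theta (theta T))) =
      5 * PowerSeries.X ^ 2 *
        ((2 : ℚ) • theta (A 1 (A 2 (A 3 (A 4 T)))) + A 1 (A 2 (A 3 (A 4 T)))) := by
  set g : PowerSeries ℚ :=
    (2 : ℚ) • theta (A 1 (A 2 (A 3 (A 4 T)))) + A 1 (A 2 (A 3 (A 4 T))) with hg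
  ext n
  have hrw : (5 : PowerSeries ℚ) * PowerSeries.X ^ 2 * g
      = PowerSeries.X ^ 2 * ((5 : PowerSeries ℚ) * g) := by ring
  rw [hrw]
  match n with
  | 0 =>
    simp only [map_sub, map_smul, coeff_theta, PowerSeries.coeff_X_pow_mul', smul_eq_mul]
    norm_num
  | 1 =>
    simp only [map_sub, map_smul, coeff_theta, PowerSeries.coeff_X_pow_mul', smul_eq_mul]
    norm_num
    ring
  | (n + 2) =>
    have hX : PowerSeries.coeff (n + 2) (PowerSeries.X ^ 2 * ((5 : PowerSeries ℚ) * g))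
        = PowerSeries.coeff n ((5 : PowerSeries ℚ) * g) :=
      PowerSeries.coeff_X_pow_mul _ 2 n
    rw [hX]
    have h5 : (5 : PowerSeries ℚ) = PowerSeries.C 5 :=
      (map_ofNat (PowerSeries.C (R := ℚ)) 5).symm
    rw [h5, PowerSeries.coeff_C_mul]
    simp only [hg, map_add, map_smul, coeff_theta, coeff_A, coeff_T, map_sub, smul_eq_mul]
    have hmod : (n + 2) % 2 = n % 2 := Nat.add_mod_right n 2
    rw [hmod]
    by_cases hn : n % 2 = 1
    · rw [if_pos hn, if_pos hn]
      have h2 : (Nat.doubleFactorial (n + 2) : ℚ) = (n + 2) * Nat.doubleFactorial n := by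
        rw [Nat.doubleFactorial_add_two]; push_cast; ring
      have h5n : (Nat.doubleFactorial (5 * (n + 2)) : ℚ) =
          (5 * n + 10) * ((5 * n + 8) * ((5 * n + 6) * ((5 * n + 4) * ((5 * n + 2) *
            Nat.doubleFactorial (5 * n))))) := by
        have e1 : 5 * (n + 2) = (5 * n + 8) + 2 := by ring
        have e2 : 5 * n + 8 = (5 * n + 6) + 2 := by ring
        have e3 : 5 * n + 6 = (5 * n + 4) + 2 := by ring
        have e4 : 5 * n + 4 = (5 * n + 2) + 2 := by ring
        have e5 : 5 * n + 2 = (5 * n) + 2 := by ring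
        rw [e1, Nat.doubleFactorial_add_two, e2, Nat.doubleFactorial_add_two,
          e3, Nat.doubleFactorial_add_two, e4, Nat.doubleFactorial_add_two,
          e5, Nat.doubleFactorial_add_two]
        push_cast
        ring
      rw [h2, h5n]
      have hd : (Nat.doubleFactorial n : ℚ) ≠ 0 := by
        exact_mod_cast (Nat.doubleFactorial_pos n).ne'
      have hd2 : ((n : ℚ) + 2) ≠ 0 := by positivity
      push_cast
      field_simp
      ring
    · rw [if_neg hn, if_neg hn]
      ring
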